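/- Fix α ∈ (0, π), β ∈ ℝ, U_ξ ∈ ℝ, r > 0 (playing the role of ‖x‖), and m > 0 (playing the role of ‖b‖), and define F(γ) = r·(U_ξ·cos α + [m·(1 − cos γ)/sin(γ − β) − U_ξ·cos(γ − β)/sin(γ − β)]·sin α) for γ ∈ (β, β + π). Then F'(γ) = 0 if and only if m·cos(γ − β) = U_ξ + m·cos β, and at any such critical point γ*, F''(γ*) = r·sin α·m/sin(γ* − β) > 0. -/

import Mathlib

noncomputable def angleObj (r m Uξ α β γ : ℝ) : ℝ :=
  r * (Uξ * Real.cos α +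
    (m * (1 - Real.cos γ) / Real.sin (γ - β) -
      Uξ * Real.cos (γ - β) / Real.sin (γ - β)) * Real.sin α)

/-- The first derivative of `angleObj` where `sin (γ - β) ≠ 0`. -/
noncomputable def angleObj' (r m Uξ α β γ : ℝ) : ℝ :=
  r * Real.sin α * (Uξ + m * Real.cos β - m * Real.cos (γ - β)) / (Real.sin (γ - β))^2

lemma hasDerivAt_angleObj (r m Uξ α β γ : ℝ) (hs : Real.sin (γ - β) ≠ 0) :
    HasDerivAt (angleObj r m Uξ α β) (angleObj' r m Uξ α β γ) γ := by
  have hN : HasDerivAt (fun x => m * (1 - Real.cos x) - Uξ * Real.cos (x - β))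
      (m * Real.sin γ + Uξ * Real.sin (γ - β)) γ := by
    have h1 : HasDerivAt (fun x : ℝ => x - β) 1 γ := (hasDerivAt_id γ).sub_const β
    have h2 := (Real.hasDerivAt_cos (γ - β)).comp γ h1
    have h3 := Real.hasDerivAt_cos γ
    have := ((h3.const_sub 1).const_mul m).sub (h2.const_mul Uξ)
    refine this.congr_deriv ?_
    ring
  have hD : HasDerivAt (fun x => Real.sin (x - β)) (Real.cos (γ - β)) γ := by
    have h1 : HasDerivAt (fun x : ℝ => x - β) 1 γ := (hasDerivAt_id γ).sub_const β
    exact ((Real.hasDerivAt_sin (γ - β)).comp γ h1).congr_deriv (mul_one _)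
  have hQ := (hN.div hD hs)
  have hF := (hQ.const_mul (r * Real.sin α)).const_add (r * Uξ * Real.cos α)
  have heq : (fun γ => r * Uξ * Real.cos α + r * Real.sin α *
      ((m * (1 - Real.cos γ) - Uξ * Real.cos (γ - β)) / Real.sin (γ - β)))
      = angleObj r m Uξ α β := by
    funext x
    unfold angleObj
    ring
  rw [← heq]
  refine hF.congr_deriv ?_
  unfold angleObj'
  have hc : Real.cos β = Real.cos γ * Real.cos (γ - β) + Real.sin γ * Real.sin (γ - β) := by
    have := Real.cos_sub γ (γ - β)
    rw [show γ - (γ - β) = β by ring] at this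
    linarith
  have hp := Real.sin_sq_add_cos_sq (γ - β)
  field_simp
  congr 1
  linear_combination -m * hc + Uξ * hp

lemma hasDerivAt_angleObj' (r m Uξ α β γ : ℝ) (hs : Real.sin (γ - β) ≠ 0) :
    HasDerivAt (angleObj' r m Uξ α β)
      ((r * Real.sin α * (m * Real.sin (γ - β)) * (Real.sin (γ - β))^2 -
        r * Real.sin α * (Uξ + m * Real.cos β - m * Real.cos (γ - β)) *
          (2 * Real.sin (γ - β) * Real.cos (γ - β))) / ((Real.sin (γ - β))^2)^2) γ := by
  have h1 : HasDerivAt (fun x : ℝ => x - β) 1 γ := (hasDerivAt_id γ).sub_const β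
  have hc := (Real.hasDerivAt_cos (γ - β)).comp γ h1
  have hsin : HasDerivAt (fun x => Real.sin (x - β)) (Real.cos (γ - β)) γ := by
    exact ((Real.hasDerivAt_sin (γ - β)).comp γ h1).congr_deriv (mul_one _)
  have hT : HasDerivAt (fun x => r * Real.sin α * (Uξ + m * Real.cos β - m * Real.cos (x - β)))
      (r * Real.sin α * (m * Real.sin (γ - β))) γ := by
    have := ((hc.const_mul m).const_sub (Uξ + m * Real.cos β)).const_mul (r * Real.sin α)
    refine this.congr_deriv ?_
    ring
  have hB : HasDerivAt (fun x => (Real.sin (x - β))^2)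
      (2 * Real.sin (γ - β) * Real.cos (γ - β)) γ := by
    have := hsin.pow 2
    refine this.congr_deriv ?_
    norm_num
  have hs2 : (Real.sin (γ - β))^2 ≠ 0 := pow_ne_zero 2 hs
  exact hT.div hB hs2

theorem angleObj_critical_point (r m Uξ α β : ℝ)
    (hα0 : 0 < α) (hαπ : α < Real.pi) (hr : 0 < r) (hm : 0 < m) :
    ∀ γ ∈ Set.Ioo β (β + Real.pi),
      (deriv (angleObj r m Uξ α β) γ = 0 ↔
        m * Real.cos (γ - β) = Uξ + m * Real.cos β) ∧
      (deriv (angleObj r m Uξ α β) γ = 0 →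
        deriv (deriv (angleObj r m Uξ α β)) γ =
          r * Real.sin α * m / Real.sin (γ - β) ∧
        0 < r * Real.sin α * m / Real.sin (γ - β)) := by
  intro γ hγ
  obtain ⟨h1, h2⟩ := hγ
  have hsb0 : 0 < γ - β := by linarith
  have hsbπ : γ - β < Real.pi := by linarith
  have hspos : 0 < Real.sin (γ - β) := Real.sin_pos_of_pos_of_lt_pi hsb0 hsbπ
  have hs : Real.sin (γ - β) ≠ 0 := ne_of_gt hspos
  have hsinα : 0 < Real.sin α := Real.sin_pos_of_pos_of_lt_pi hα0 hαπ
  have hd1 : deriv (angleObj r m Uξ α β) γ = angleObj' r m Uξ α β γ :=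
    (hasDerivAt_angleObj r m Uξ α β γ hs).deriv
  have hiff : deriv (angleObj r m Uξ α β) γ = 0 ↔
      m * Real.cos (γ - β) = Uξ + m * Real.cos β := by
    rw [hd1]
    unfold angleObj'
    rw [div_eq_zero_iff]
    constructor
    · rintro (h | h)
      · have hrs : r * Real.sin α ≠ 0 := by positivity
        have : Uξ + m * Real.cos β - m * Real.cos (γ - β) = 0 := by
          rcases mul_eq_zero.mp h with h' | h'
          · exact absurd h' hrs
          · exact h'
        linarith
      · exact absurd h (pow_ne_zero 2 hs)
    · intro h
      left
      rw [show Uξ + m * Real.cos β - m * Real.cos (γ - β) = 0 by linarith]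
      ring
  refine ⟨hiff, fun hcrit => ?_⟩
  have hkey : Uξ + m * Real.cos β - m * Real.cos (γ - β) = 0 := by
    have := hiff.mp hcrit; linarith
  have hev : deriv (angleObj r m Uξ α β) =ᶠ[nhds γ] angleObj' r m Uξ α β := by
    have hopen : IsOpen {x : ℝ | Real.sin (x - β) ≠ 0} := by
      have : Continuous fun x : ℝ => Real.sin (x - β) :=
        Real.continuous_sin.comp (continuous_id.sub continuous_const)
      exact isOpen_ne.preimage this
    filter_upwards [hopen.mem_nhds hs] with x hx
    exact (hasDerivAt_angleObj r m Uξ α β x hx).deriv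
  have hd2 : deriv (deriv (angleObj r m Uξ α β)) γ = deriv (angleObj' r m Uξ α β) γ :=
    hev.deriv_eq
  have hd2' : deriv (angleObj' r m Uξ α β) γ = r * Real.sin α * m / Real.sin (γ - β) := by
    rw [(hasDerivAt_angleObj' r m Uξ α β γ hs).deriv, hkey]
    field_simp
    ring
  refine ⟨hd2.trans hd2', ?_⟩
  positivity
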